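/- In the two-agent instance with goods {g, g_1,...,g_k, g'_1,...,g'_k}, where v_1(g) = v_2(g) = (1/c+1)^k, v_1(g_i) = v_2(g'_i) = (1/c+1)^{i-1}, and v_1(g'_i) = v_2(g_i) = 0 for all i ∈ [k], no allocation is simultaneously Pareto efficient and c-EFkX, for any 0 < c ≤ 1 and integer k ≥ 1. -/
import Mathlib


open Finset

/-- In the two-agent instance with goods
`{g, g_1, …, g_k, g'_1, …, g'_k}` and values
`v_1(g) = v_2(g) = (1/c+1)^k`, `v_1(g_{i+1}) = v_2(g'_{i+1}) = (1/c+1)^i`,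
`v_1(g'_i) = v_2(g_i) = 0`, no allocation is both Pareto efficient and
`c`-EFkX, for any `0 < c ≤ 1` and `k ≥ 1`. -/
theorem stmt_4 (k : ℕ) (hk : 1 ≤ k) (c : ℝ) (hc0 : 0 < c) (hc1 : c ≤ 1)
    (G : Type) [Fintype G] [DecidableEq G]
    (eg : G) (e e' : Fin k → G)
    (hinj : Function.Injective e) (hinj' : Function.Injective e')
    (hee' : ∀ i j, e i ≠ e' j) (hge : ∀ i, eg ≠ e i) (hge' : ∀ i, eg ≠ e' i)
    (hcover : ∀ x : G, x = eg ∨ (∃ i, x = e i) ∨ (∃ i, x = e' i))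
    (v : Fin 2 → G → ℝ)
    (hv0g : v 0 eg = (1/c + 1)^k) (hv1g : v 1 eg = (1/c + 1)^k)
    (hv0e : ∀ i : Fin k, v 0 (e i) = (1/c + 1)^(i : ℕ))
    (hv1e' : ∀ i : Fin k, v 1 (e' i) = (1/c + 1)^(i : ℕ))
    (hv0e' : ∀ i : Fin k, v 0 (e' i) = 0)
    (hv1e : ∀ i : Fin k, v 1 (e i) = 0)
    (X : Fin 2 → Finset G)
    (hdisjX : Disjoint (X 0) (X 1)) (hcomplete : X 0 ∪ X 1 = Finset.univ) :
    ¬ ((¬ ∃ Y : Fin 2 → Finset G,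
          (Disjoint (Y 0) (Y 1) ∧ Y 0 ∪ Y 1 = Finset.univ) ∧
          (∀ a, ∑ x ∈ X a, v a x ≤ ∑ x ∈ Y a, v a x) ∧
          (∃ a, ∑ x ∈ X a, v a x < ∑ x ∈ Y a, v a x)) ∧
       (∀ i j : Fin 2, i ≠ j → ∀ T ⊆ X j, T.card = min k (X j).card →
          c * ∑ x ∈ (X j) \ T, v i x ≤ ∑ x ∈ X i, v i x)) := by
  rintro ⟨hPE, hEF⟩
  have hic : (0:ℝ) < 1/c := by positivity
  set t : ℝ := 1/c + 1 with ht
  have ht1 : (1:ℝ) < t := by simp only [ht]; linarith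
  have htpos : ∀ n : ℕ, (0:ℝ) < t ^ n := fun n => pow_pos (by linarith) n
  -- PE forces e i ∈ X 0
  have he0 : ∀ i, e i ∈ X 0 := by
    intro i
    by_contra h
    have hmem : e i ∈ X 1 := by
      have hu : e i ∈ X 0 ∪ X 1 := by rw [hcomplete]; exact mem_univ _
      rcases mem_union.mp hu with h' | h'
      · exact absurd h' h
      · exact h'
    apply hPE
    refine ⟨![insert (e i) (X 0), (X 1).erase (e i)], ⟨?_, ?_⟩, ?_, ?_⟩
    · simp only [Matrix.cons_val_zero, Matrix.cons_val_one, Matrix.head_cons]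
      rw [Finset.disjoint_insert_left]
      exact ⟨fun hx => (Finset.mem_erase.mp hx).1 rfl,
        hdisjX.mono_right (Finset.erase_subset _ _)⟩
    · simp only [Matrix.cons_val_zero, Matrix.cons_val_one, Matrix.head_cons]
      rw [← hcomplete]
      ext x
      by_cases hx : x = e i
      · subst hx; simp [hmem]
      · simp [hx]
    · intro a
      fin_cases a
      · show ∑ x ∈ X 0, v 0 x ≤ ∑ x ∈ insert (e i) (X 0), v 0 x
        rw [Finset.sum_insert h, hv0e i]
        have := htpos (i:ℕ)
        linarith
      · show ∑ x ∈ X 1, v 1 x ≤ ∑ x ∈ (X 1).erase (e i), v 1 x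
        exact le_of_eq (Finset.sum_erase _ (hv1e i)).symm
    · refine ⟨0, ?_⟩
      show ∑ x ∈ X 0, v 0 x < ∑ x ∈ insert (e i) (X 0), v 0 x
      rw [Finset.sum_insert h, hv0e i]
      have := htpos (i:ℕ)
      linarith
  -- PE forces e' i ∈ X 1
  have he1 : ∀ i, e' i ∈ X 1 := by
    intro i
    by_contra h
    have hmem : e' i ∈ X 0 := by
      have hu : e' i ∈ X 0 ∪ X 1 := by rw [hcomplete]; exact mem_univ _
      rcases mem_union.mp hu with h' | h'
      · exact h'
      · exact absurd h' h
    apply hPE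
    refine ⟨![(X 0).erase (e' i), insert (e' i) (X 1)], ⟨?_, ?_⟩, ?_, ?_⟩
    · simp only [Matrix.cons_val_zero, Matrix.cons_val_one, Matrix.head_cons]
      rw [Finset.disjoint_insert_right]
      exact ⟨fun hx => (Finset.mem_erase.mp hx).1 rfl,
        hdisjX.mono_left (Finset.erase_subset _ _)⟩
    · simp only [Matrix.cons_val_zero, Matrix.cons_val_one, Matrix.head_cons]
      rw [← hcomplete]
      ext x
      by_cases hx : x = e' i
      · subst hx; simp [hmem]
      · simp [hx]
    · intro a
      fin_cases a
      · show ∑ x ∈ X 0, v 0 x ≤ ∑ x ∈ (X 0).erase (e' i), v 0 x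
        exact le_of_eq (Finset.sum_erase _ (hv0e' i)).symm
      · show ∑ x ∈ X 1, v 1 x ≤ ∑ x ∈ insert (e' i) (X 1), v 1 x
        rw [Finset.sum_insert h, hv1e' i]
        have := htpos (i:ℕ)
        linarith
    · refine ⟨1, ?_⟩
      show ∑ x ∈ X 1, v 1 x < ∑ x ∈ insert (e' i) (X 1), v 1 x
      rw [Finset.sum_insert h, hv1e' i]
      have := htpos (i:ℕ)
      linarith
  have htne : t - 1 = 1/c := by simp [ht]
  have hgeom : ∑ i ∈ Finset.range k, t ^ i = c * (t ^ k - 1) := by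
    rw [geom_sum_eq (by linarith : t ≠ 1), htne, one_div, div_inv_eq_mul]
    ring
  have hX1sum : ∑ x ∈ Finset.image e' Finset.univ, v 1 x = c * (t ^ k - 1) := by
    rw [Finset.sum_image (fun a _ b _ hab => hinj' hab)]
    simp only [hv1e']
    rw [Fin.sum_univ_eq_sum_range (fun i => t ^ i) k]
    exact hgeom
  have hX0sum : ∑ x ∈ Finset.image e Finset.univ, v 0 x = c * (t ^ k - 1) := by
    rw [Finset.sum_image (fun a _ b _ hab => hinj hab)]
    simp only [hv0e]
    rw [Fin.sum_univ_eq_sum_range (fun i => t ^ i) k]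
    exact hgeom
  have hgeu : eg ∈ X 0 ∪ X 1 := by rw [hcomplete]; exact mem_univ _
  rcases mem_union.mp hgeu with hg0 | hg1
  · -- eg ∈ X 0
    have hX1 : X 1 = Finset.image e' Finset.univ := by
      apply Finset.Subset.antisymm
      · intro x hx
        rcases hcover x with rfl | ⟨i, rfl⟩ | ⟨i, rfl⟩
        · exact absurd hx (Finset.disjoint_left.mp hdisjX hg0)
        · exact absurd hx (Finset.disjoint_left.mp hdisjX (he0 i))
        · exact Finset.mem_image_of_mem _ (mem_univ i)
      · intro x hx
        rcases Finset.mem_image.mp hx with ⟨i, _, rfl⟩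
        exact he1 i
    have hX0 : X 0 = insert eg (Finset.image e Finset.univ) := by
      apply Finset.Subset.antisymm
      · intro x hx
        rcases hcover x with rfl | ⟨i, rfl⟩ | ⟨i, rfl⟩
        · exact Finset.mem_insert_self _ _
        · exact Finset.mem_insert_of_mem (Finset.mem_image_of_mem _ (mem_univ i))
        · exact absurd hx (Finset.disjoint_right.mp hdisjX (he1 i))
      · intro x hx
        rcases Finset.mem_insert.mp hx with rfl | hx
        · exact hg0
        · rcases Finset.mem_image.mp hx with ⟨i, _, rfl⟩; exact he0 i
    have hegnot : eg ∉ Finset.image e Finset.univ := by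
      simp only [Finset.mem_image]; rintro ⟨i, _, hh⟩; exact hge i hh.symm
    have hcard0 : (X 0).card = k + 1 := by
      rw [hX0, Finset.card_insert_of_notMem hegnot,
        Finset.card_image_of_injective _ hinj, Finset.card_univ, Fintype.card_fin]
    have hT := hEF 1 0 (by decide) (Finset.image e Finset.univ)
      (by rw [hX0]; exact Finset.subset_insert _ _)
      (by rw [hcard0, Finset.card_image_of_injective _ hinj, Finset.card_univ,
        Fintype.card_fin, Nat.min_eq_left (Nat.le_succ k)])
    have hsd : X 0 \ Finset.image e Finset.univ = {eg} := by
      ext x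
      simp only [Finset.mem_sdiff, hX0, Finset.mem_insert, Finset.mem_singleton]
      constructor
      · rintro ⟨rfl | hx, hx'⟩
        · rfl
        · exact absurd hx hx'
      · rintro rfl; exact ⟨Or.inl rfl, hegnot⟩
    rw [hsd, Finset.sum_singleton, hv1g, hX1, hX1sum] at hT
    nlinarith
  · -- eg ∈ X 1
    have hX0 : X 0 = Finset.image e Finset.univ := by
      apply Finset.Subset.antisymm
      · intro x hx
        rcases hcover x with rfl | ⟨i, rfl⟩ | ⟨i, rfl⟩
        · exact absurd hg1 (Finset.disjoint_left.mp hdisjX hx)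
        · exact Finset.mem_image_of_mem _ (mem_univ i)
        · exact absurd hx (Finset.disjoint_right.mp hdisjX (he1 i))
      · intro x hx
        rcases Finset.mem_image.mp hx with ⟨i, _, rfl⟩
        exact he0 i
    have hX1 : X 1 = insert eg (Finset.image e' Finset.univ) := by
      apply Finset.Subset.antisymm
      · intro x hx
        rcases hcover x with rfl | ⟨i, rfl⟩ | ⟨i, rfl⟩
        · exact Finset.mem_insert_self _ _
        · exact absurd hx (Finset.disjoint_left.mp hdisjX (he0 i))
        · exact Finset.mem_insert_of_mem (Finset.mem_image_of_mem _ (mem_univ i))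
      · intro x hx
        rcases Finset.mem_insert.mp hx with rfl | hx
        · exact hg1
        · rcases Finset.mem_image.mp hx with ⟨i, _, rfl⟩; exact he1 i
    have hegnot : eg ∉ Finset.image e' Finset.univ := by
      simp only [Finset.mem_image]; rintro ⟨i, _, hh⟩; exact hge' i hh.symm
    have hcard1 : (X 1).card = k + 1 := by
      rw [hX1, Finset.card_insert_of_notMem hegnot,
        Finset.card_image_of_injective _ hinj', Finset.card_univ, Fintype.card_fin]
    have hT := hEF 0 1 (by decide) (Finset.image e' Finset.univ)
      (by rw [hX1]; exact Finset.subset_insert _ _)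
      (by rw [hcard1, Finset.card_image_of_injective _ hinj', Finset.card_univ,
        Fintype.card_fin, Nat.min_eq_left (Nat.le_succ k)])
    have hsd : X 1 \ Finset.image e' Finset.univ = {eg} := by
      ext x
      simp only [Finset.mem_sdiff, hX1, Finset.mem_insert, Finset.mem_singleton]
      constructor
      · rintro ⟨rfl | hx, hx'⟩
        · rfl
        · exact absurd hx hx'
      · rintro rfl; exact ⟨Or.inl rfl, hegnot⟩
    rw [hsd, Finset.sum_singleton, hv0g, hX0, hX0sum] at hT
    nlinarith
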